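/- With Ω, T, p, q as above, for every input x: Σ_{t=1}^{T} A_t(x) ≤ Σ_{t=1}^{T} (1 + 2(T − t)) · E_t(x), where A_t(x) = E_{y∼p_{≤T}(·|x)}[ 1{t ≤ |y|} · D_TVD(p(·|x,y_{<t}), q(·|x,y_{<t})) ] and E_t(x) = E_{y∼q_{≤T}(·|x)}[ 1{t ≤ |y|} · D_TVD(p(·|x,y_{<t}), q(·|x,y_{<t})) ]. -/

import Mathlib

open Finset

/-- Total variation distance between two distributions on a finite set. -/
noncomputable def tvd {Ω : Type*} [Fintype Ω] (P Q : Ω → ℝ) : ℝ :=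
  (1 / 2) * ∑ c, |P c - Q c|

/-- `IsDist P`: `P` is a probability distribution on the finite set `Ω`. -/
def IsDist {Ω : Type*} [Fintype Ω] (P : Ω → ℝ) : Prop :=
  (∀ c, 0 ≤ P c) ∧ ∑ c, P c = 1

/-- A next-token model: for every input `x` and every prefix, a next-token distribution. -/
def IsModel {Ω ι : Type*} [Fintype Ω] (p : ι → List Ω → Ω → ℝ) : Prop :=
  ∀ x pre, IsDist (p x pre)

/-- `Stopped eos T y`: `y` is a completed output sequence for horizon `T`: it is nonempty,
has length at most `T`, contains the end-of-sequence token at no position except possibly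
the last one, and either ends with `eos` or has length exactly `T`. -/
def Stopped {Ω : Type*} [DecidableEq Ω] (eos : Ω) (T : ℕ) (y : List Ω) : Prop :=
  y ≠ [] ∧ y.length ≤ T ∧ eos ∉ y.dropLast ∧ (y.getLast? = some eos ∨ y.length = T)

open Classical in
/-- Probability that autoregressive sampling — where the next-token distribution used to
sample the `(t+1)`-st token given the length-`t` prefix `pre` is `ms t pre`, with horizon `T`
and end-of-sequence token `eos` — outputs exactly the sequence `y`. -/
noncomputable def seqProb {Ω : Type*} [Fintype Ω] [DecidableEq Ω] (eos : Ω)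
    (ms : ℕ → List Ω → Ω → ℝ) (T : ℕ) (y : List Ω) : ℝ :=
  if Stopped eos T y then ∏ t ∈ Finset.range y.length, ms t (y.take t) (y.getD t eos) else 0

/-- Expectation of `f` under the induced distribution over output sequences. -/
noncomputable def seqExp {Ω : Type*} [Fintype Ω] [DecidableEq Ω] (eos : Ω)
    (ms : ℕ → List Ω → Ω → ℝ) (T : ℕ) (f : List Ω → ℝ) : ℝ :=
  ∑ n ∈ Finset.Icc 1 T, ∑ v : Fin n → Ω, seqProb eos ms T (List.ofFn v) * f (List.ofFn v)

/-- Expectation under `p_{≤T}(·|x)`, the output-sequence distribution of the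
autoregressive model with next-token distributions `p`. -/
noncomputable def modelExp {Ω ι : Type*} [Fintype Ω] [DecidableEq Ω] (eos : Ω)
    (p : ι → List Ω → Ω → ℝ) (x : ι) (T : ℕ) (f : List Ω → ℝ) : ℝ :=
  seqExp eos (fun _ pre => p x pre) T f

/-- Expectation under the mixed-model sequence distribution `M(x, ∅, z)`, where the letter
`z_t` (`true` = letter `P`, i.e. target model `p`; `false` = letter `Q`, i.e. draft model `q`)
selects the model used to sample the `t`-th token, with horizon `|z|` and empty prefix. -/
noncomputable def mixExp {Ω ι : Type*} [Fintype Ω] [DecidableEq Ω] (eos : Ω)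
    (p q : ι → List Ω → Ω → ℝ) (x : ι) (z : List Bool) (f : List Ω → ℝ) : ℝ :=
  seqExp eos (fun t pre => if z.getD t true then p x pre else q x pre) z.length f

/-- `Σ_{t=1}^{|y|} D_TVD(p(·|x, y_{<t}), q(·|x, y_{<t}))`. -/
noncomputable def totalLoss {Ω ι : Type*} [Fintype Ω] (p q : ι → List Ω → Ω → ℝ)
    (x : ι) (y : List Ω) : ℝ :=
  ∑ t ∈ Finset.range y.length, tvd (p x (y.take t)) (q x (y.take t))

/-- `1{t ≤ |y|} · D_TVD(p(·|x, y_{<t}), q(·|x, y_{<t}))` for a (1-indexed) position `t`. -/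
noncomputable def stepLoss {Ω ι : Type*} [Fintype Ω] (p q : ι → List Ω → Ω → ℝ)
    (x : ι) (t : ℕ) (y : List Ω) : ℝ :=
  if t ≤ y.length then tvd (p x (y.take (t - 1))) (q x (y.take (t - 1))) else 0

/-- Expected output length `L_p(x) = E_{y∼p_{≤T}(·|x)}[|y|]` of the target model. -/
noncomputable def Lp {Ω ι : Type*} [Fintype Ω] [DecidableEq Ω] (eos : Ω)
    (p : ι → List Ω → Ω → ℝ) (x : ι) (T : ℕ) : ℝ :=
  modelExp eos p x T (fun y => (y.length : ℝ))

/-- Sequence-level acceptance rate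
`α(x) = 1 − E_{y∼p_{≤T}(·|x)}[Σ_{t=1}^{|y|} D_TVD(p(·|x,y_{<t}), q(·|x,y_{<t}))] / L_p(x)`. -/
noncomputable def acceptRate {Ω ι : Type*} [Fintype Ω] [DecidableEq Ω] (eos : Ω)
    (p q : ι → List Ω → Ω → ℝ) (x : ι) (T : ℕ) : ℝ :=
  1 - modelExp eos p x T (totalLoss p q x) / Lp eos p x T

/-- On-policy distillation loss
`ε(x) = E_{y∼q_{≤T}(·|x)}[(1/|y|) Σ_{t=1}^{|y|} D_TVD(p(·|x,y_{<t}), q(·|x,y_{<t}))]`. -/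
noncomputable def onPolicyLoss {Ω ι : Type*} [Fintype Ω] [DecidableEq Ω] (eos : Ω)
    (p q : ι → List Ω → Ω → ℝ) (x : ι) (T : ℕ) : ℝ :=
  modelExp eos q x T (fun y => (1 / (y.length : ℝ)) * totalLoss p q x y)

/-- `A_t(x) = E_{y∼p_{≤T}(·|x)}[1{t ≤ |y|} · D_TVD(p(·|x,y_{<t}), q(·|x,y_{<t}))]`. -/
noncomputable def Aterm {Ω ι : Type*} [Fintype Ω] [DecidableEq Ω] (eos : Ω)
    (p q : ι → List Ω → Ω → ℝ) (x : ι) (T t : ℕ) : ℝ :=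
  modelExp eos p x T (stepLoss p q x t)

/-- `E_t(x) = E_{y∼q_{≤T}(·|x)}[1{t ≤ |y|} · D_TVD(p(·|x,y_{<t}), q(·|x,y_{<t}))]`. -/
noncomputable def Eterm {Ω ι : Type*} [Fintype Ω] [DecidableEq Ω] (eos : Ω)
    (p q : ι → List Ω → Ω → ℝ) (x : ι) (T t : ℕ) : ℝ :=
  modelExp eos q x T (stepLoss p q x t)

set_option maxHeartbeats 1000000
section Aux

set_option linter.unusedSectionVars false
variable {Ω : Type*} [Fintype Ω] [DecidableEq Ω]

lemma tvd_nonneg (P Q : Ω → ℝ) : 0 ≤ tvd P Q := by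
  unfold tvd; positivity

lemma tvd_le_one {P Q : Ω → ℝ} (hP : IsDist P) (hQ : IsDist Q) : tvd P Q ≤ 1 := by
  unfold tvd
  have h : ∑ c, |P c - Q c| ≤ ∑ c, (P c + Q c) := by
    apply Finset.sum_le_sum; intro c _
    exact abs_le.mpr ⟨by linarith [hP.1 c, hQ.1 c], by linarith [hP.1 c, hQ.1 c]⟩
  rw [Finset.sum_add_distrib, hP.2, hQ.2] at h
  linarith

lemma stepLoss_abs_le_one {ι : Type*} (p q : ι → List Ω → Ω → ℝ)
    (hp : IsModel p) (hq : IsModel q) (x : ι) (t : ℕ) (y : List Ω) :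
    |stepLoss p q x t y| ≤ 1 := by
  unfold stepLoss
  split_ifs
  · rw [abs_of_nonneg (tvd_nonneg _ _)]
    exact tvd_le_one (hp x _) (hq x _)
  · simp

/-- Recursive expectation of `f` over completions of the prefix `pre`, with `n` remaining
steps. -/
noncomputable def Fexp (eos : Ω) (ms : ℕ → List Ω → Ω → ℝ) :
    ℕ → List Ω → (List Ω → ℝ) → ℝ
  | 0, pre, f => f pre
  | n+1, pre, f => ∑ c, ms pre.length pre c *
      (if c = eos then f (pre ++ [c]) else Fexp eos ms n (pre ++ [c]) f)

lemma Fexp_congr1 (eos : Ω) (ms : ℕ → List Ω → Ω → ℝ) (f1 f2 : List Ω → ℝ) :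
    ∀ n pre, (∀ s : List Ω, s ≠ [] → f1 (pre ++ s) = f2 (pre ++ s)) →
    1 ≤ n → Fexp eos ms n pre f1 = Fexp eos ms n pre f2 := by
  intro n
  induction n with
  | zero => omega
  | succ n ih =>
    intro pre h _
    simp only [Fexp]
    apply Finset.sum_congr rfl
    intro c _
    by_cases hc : c = eos
    · simp [hc, h [eos] (by simp)]
    · simp only [if_neg hc]
      rcases Nat.eq_zero_or_pos n with hn | hn
      · subst hn; simp only [Fexp]; rw [h [c] (by simp)]
      · rw [ih (pre ++ [c]) (fun s hs => by
          have := h ([c] ++ s) (by simp)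
          simpa [List.append_assoc] using this) hn]

lemma Fexp_const (eos : Ω) (ms : ℕ → List Ω → Ω → ℝ)
    (hms : ∀ t pre, IsDist (ms t pre)) (a : ℝ) :
    ∀ n pre, Fexp eos ms n pre (fun _ => a) = a := by
  intro n
  induction n with
  | zero => intro pre; simp [Fexp]
  | succ n ih =>
    intro pre
    simp only [Fexp, ]
    have : ∀ c : Ω, (if c = eos then a else Fexp eos ms n (pre ++ [c]) (fun _ => a)) = a := by
      intro c; by_cases hc : c = eos <;> simp [hc, ih]
    simp only [this, ← Finset.sum_mul, (hms pre.length pre).2, one_mul]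

lemma Fexp_abs_le (eos : Ω) (ms : ℕ → List Ω → Ω → ℝ)
    (hms : ∀ t pre, IsDist (ms t pre)) (f : List Ω → ℝ) (B : ℝ)
    (hf : ∀ y, |f y| ≤ B) :
    ∀ n pre, |Fexp eos ms n pre f| ≤ B := by
  intro n
  induction n with
  | zero => intro pre; exact hf pre
  | succ n ih =>
    intro pre
    simp only [Fexp]
    calc |∑ c, ms pre.length pre c *
        (if c = eos then f (pre ++ [c]) else Fexp eos ms n (pre ++ [c]) f)|
        ≤ ∑ c, |ms pre.length pre c *
          (if c = eos then f (pre ++ [c]) else Fexp eos ms n (pre ++ [c]) f)| :=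
          Finset.abs_sum_le_sum_abs _ _
      _ ≤ ∑ c, ms pre.length pre c * B := by
          apply Finset.sum_le_sum; intro c _
          rw [abs_mul, abs_of_nonneg ((hms pre.length pre).1 c)]
          apply mul_le_mul_of_nonneg_left _ ((hms pre.length pre).1 c)
          by_cases hc : c = eos <;> simp [hc, hf, ih]
      _ = B := by rw [← Finset.sum_mul, (hms pre.length pre).2, one_mul]

end Aux
section Aux2
set_option linter.unusedSectionVars false
variable {Ω ι : Type*} [Fintype Ω] [DecidableEq Ω]

lemma Fexp_stepLoss_const (eos : Ω) (ms : ℕ → List Ω → Ω → ℝ)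
    (hms : ∀ t pre, IsDist (ms t pre)) (p q : ι → List Ω → Ω → ℝ) (x : ι)
    (t : ℕ) (ht1 : 1 ≤ t) (n : ℕ) (pre : List Ω)
    (h1 : t - 1 ≤ pre.length) (h2 : t ≤ pre.length + n) :
    Fexp eos ms n pre (stepLoss p q x t) =
      tvd (p x (pre.take (t - 1))) (q x (pre.take (t - 1))) := by
  have key : ∀ s : List Ω, t ≤ (pre ++ s).length →
      stepLoss p q x t (pre ++ s) =
        tvd (p x (pre.take (t - 1))) (q x (pre.take (t - 1))) := by
    intro s hs
    unfold stepLoss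
    rw [if_pos hs, List.take_append_of_le_length h1]
  rcases Nat.eq_zero_or_pos n with hn | hn
  · subst hn
    simp only [Fexp]
    have := key [] (by simpa using h2)
    simpa using this
  · rw [Fexp_congr1 eos ms _ (fun _ => tvd (p x (pre.take (t - 1))) (q x (pre.take (t - 1))))
      n pre (fun s hs => key s ?_) hn]
    · exact Fexp_const eos ms hms _ n pre
    · have : 1 ≤ s.length := List.length_pos_iff.mpr hs
      simp only [List.length_append]
      omega

/-- Accumulated TVD along the `q`-model, counting only positions with prefix length `< m`. -/
noncomputable def Wacc (eos : Ω) (p q : ι → List Ω → Ω → ℝ) (x : ι) (m : ℕ) :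
    ℕ → List Ω → ℝ
  | 0, _ => 0
  | n+1, pre => if m ≤ pre.length then 0 else
      tvd (p x pre) (q x pre) + ∑ c, q x pre c *
        (if c = eos then 0 else Wacc eos p q x m n (pre ++ [c]))

lemma Wacc_nonneg (eos : Ω) (p q : ι → List Ω → Ω → ℝ) (hq : IsModel q) (x : ι) (m : ℕ) :
    ∀ n pre, 0 ≤ Wacc eos p q x m n pre := by
  intro n
  induction n with
  | zero => intro pre; simp [Wacc]
  | succ n ih =>
    intro pre
    simp only [Wacc]
    split_ifs
    · exact le_rfl
    · have h1 : 0 ≤ ∑ c, q x pre c * (if c = eos then 0 else Wacc eos p q x m n (pre ++ [c])) := by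
        apply Finset.sum_nonneg; intro c _
        apply mul_nonneg ((hq x pre).1 c)
        split_ifs with hc
        · exact le_rfl
        · exact ih _
      linarith [tvd_nonneg (p x pre) (q x pre)]

/-- Hybrid argument: the gap between the `p`-expectation and the `q`-expectation of
`stepLoss t` is at most twice the accumulated TVD below level `t - 1`. -/
lemma hybrid_bound (eos : Ω) (p q : ι → List Ω → Ω → ℝ)
    (hp : IsModel p) (hq : IsModel q) (x : ι) (t : ℕ) (ht1 : 1 ≤ t) :
    ∀ n pre, t ≤ pre.length + n →
    Fexp eos (fun _ pre => p x pre) n pre (stepLoss p q x t) -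
      Fexp eos (fun _ pre => q x pre) n pre (stepLoss p q x t) ≤
      2 * Wacc eos p q x (t - 1) n pre := by
  intro n
  induction n with
  | zero => intro pre _; simp [Fexp, Wacc]
  | succ n ih =>
    intro pre ht2
    by_cases h : t - 1 ≤ pre.length
    · have e1 := Fexp_stepLoss_const eos (fun _ pre => p x pre) (fun _ pre => hp x pre)
        p q x t ht1 (n+1) pre h (by omega)
      have e2 := Fexp_stepLoss_const eos (fun _ pre => q x pre) (fun _ pre => hq x pre)
        p q x t ht1 (n+1) pre h (by omega)
      rw [e1, e2, sub_self]
      have := Wacc_nonneg eos p q hq x (t-1) (n+1) pre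
      linarith
    · -- unfold both sides
      simp only [Fexp, Wacc, if_neg h]
      set g := stepLoss p q x t with hg
      set hpv : Ω → ℝ := fun c =>
        (if c = eos then g (pre ++ [c]) else Fexp eos (fun _ pre => p x pre) n (pre ++ [c]) g)
        with hhpv
      set hqv : Ω → ℝ := fun c =>
        (if c = eos then g (pre ++ [c]) else Fexp eos (fun _ pre => q x pre) n (pre ++ [c]) g)
        with hhqv
      have split : ∑ c, p x pre c * hpv c - ∑ c, q x pre c * hqv c =
          (∑ c, (p x pre c - q x pre c) * hpv c) + ∑ c, q x pre c * (hpv c - hqv c) := by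
        rw [← Finset.sum_sub_distrib, ← Finset.sum_add_distrib]
        apply Finset.sum_congr rfl; intro c _; ring
      rw [split]
      have habs : ∀ c, |hpv c| ≤ 1 := by
        intro c
        simp only [hhpv]
        split_ifs with hc
        · exact stepLoss_abs_le_one p q hp hq x t _
        · exact Fexp_abs_le eos _ (fun _ pre => hp x pre) g 1
            (stepLoss_abs_le_one p q hp hq x t) n (pre ++ [c])
      have b1 : ∑ c, (p x pre c - q x pre c) * hpv c ≤ 2 * tvd (p x pre) (q x pre) := by
        calc ∑ c, (p x pre c - q x pre c) * hpv c
            ≤ ∑ c, |p x pre c - q x pre c| := by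
              apply Finset.sum_le_sum; intro c _
              calc (p x pre c - q x pre c) * hpv c ≤ |(p x pre c - q x pre c) * hpv c| :=
                    le_abs_self _
                _ = |p x pre c - q x pre c| * |hpv c| := abs_mul _ _
                _ ≤ |p x pre c - q x pre c| * 1 :=
                    mul_le_mul_of_nonneg_left (habs c) (abs_nonneg _)
                _ = |p x pre c - q x pre c| := mul_one _
          _ = 2 * tvd (p x pre) (q x pre) := by unfold tvd; ring
      have b2 : ∑ c, q x pre c * (hpv c - hqv c) ≤
          ∑ c, q x pre c * (if c = eos then 0 else 2 * Wacc eos p q x (t-1) n (pre ++ [c])) := by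
        apply Finset.sum_le_sum; intro c _
        apply mul_le_mul_of_nonneg_left _ ((hq x pre).1 c)
        simp only [hhpv, hhqv]
        split_ifs with hc
        · simp
        · exact ih (pre ++ [c]) (by simp; omega)
      have : ∑ c, q x pre c * (if c = eos then 0 else 2 * Wacc eos p q x (t-1) n (pre ++ [c]))
          = 2 * ∑ c, q x pre c * (if c = eos then 0 else Wacc eos p q x (t-1) n (pre ++ [c])) := by
        rw [Finset.mul_sum]
        apply Finset.sum_congr rfl; intro c _
        split_ifs <;> ring
      rw [this] at b2
      linarith
end Aux2
section Aux3
set_option linter.unusedSectionVars false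
variable {Ω ι : Type*} [Fintype Ω] [DecidableEq Ω]

lemma Wacc_eq (eos : Ω) (p q : ι → List Ω → Ω → ℝ) (hq : IsModel q) (x : ι) (m : ℕ) :
    ∀ n pre, Wacc eos p q x m n pre =
      ∑ k ∈ Finset.Icc (pre.length + 1) m,
        Fexp eos (fun _ pre => q x pre) n pre (stepLoss p q x k) := by
  intro n
  induction n with
  | zero =>
    intro pre
    simp only [Wacc, Fexp]
    rw [eq_comm, Finset.sum_eq_zero]
    intro k hk
    rw [Finset.mem_Icc] at hk
    unfold stepLoss
    rw [if_neg (by omega)]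
  | succ n ih =>
    intro pre
    simp only [Wacc]
    split_ifs with h
    · rw [eq_comm, Finset.sum_eq_zero]
      intro k hk; rw [Finset.mem_Icc] at hk; omega
    · have hsplit : Finset.Icc (pre.length + 1) m =
          insert (pre.length + 1) (Finset.Icc (pre.length + 2) m) := by
        ext k; simp only [Finset.mem_Icc, Finset.mem_insert]; omega
      rw [hsplit, Finset.sum_insert (by simp)]
      have e1 : Fexp eos (fun _ pre => q x pre) (n+1) pre (stepLoss p q x (pre.length + 1)) =
          tvd (p x pre) (q x pre) := by
        rw [Fexp_stepLoss_const eos _ (fun _ pre => hq x pre) p q x (pre.length + 1)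
          (by omega) (n+1) pre (by omega) (by omega)]
        simp
      rw [e1]
      congr 1
      have e2 : ∀ k ∈ Finset.Icc (pre.length + 2) m,
          Fexp eos (fun _ pre => q x pre) (n+1) pre (stepLoss p q x k) =
          ∑ c, q x pre c *
            (if c = eos then 0 else Fexp eos (fun _ pre => q x pre) n (pre ++ [c])
              (stepLoss p q x k)) := by
        intro k hk
        rw [Finset.mem_Icc] at hk
        simp only [Fexp]
        apply Finset.sum_congr rfl
        intro c _
        congr 1
        by_cases hc : c = eos
        · rw [if_pos hc, if_pos hc]
          unfold stepLoss
          rw [if_neg (by simp; omega)]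
        · rw [if_neg hc, if_neg hc]
      rw [Finset.sum_congr rfl e2, Finset.sum_comm]
      apply Finset.sum_congr rfl
      intro c _
      rw [← Finset.mul_sum]
      congr 1
      by_cases hc : c = eos
      · simp [hc]
      · simp only [if_neg hc]
        rw [ih (pre ++ [c])]
        apply Finset.sum_congr _ (fun _ _ => rfl)
        congr 1
        simp
end Aux3
section Aux4
set_option linter.unusedSectionVars false
set_option maxHeartbeats 1000000
variable {Ω : Type*} [Fintype Ω] [DecidableEq Ω]

open Classical in
noncomputable def Hsum (eos : Ω) (ms : ℕ → List Ω → Ω → ℝ) (f : List Ω → ℝ)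
    (n : ℕ) (pre : List Ω) (j : ℕ) : ℝ :=
  ∑ v : Fin j → Ω,
    (if eos ∉ (List.ofFn v).dropLast ∧ ((List.ofFn v).getLast? = some eos ∨ j = n)
      then ∏ i ∈ Finset.range j,
        ms (pre.length + i) (pre ++ (List.ofFn v).take i) ((List.ofFn v).getD i eos)
      else 0) * f (pre ++ List.ofFn v)

lemma Hsum_one (eos : Ω) (ms : ℕ → List Ω → Ω → ℝ) (f : List Ω → ℝ)
    (n : ℕ) (pre : List Ω) :
    Hsum eos ms f n pre 1 =
      ∑ c, (if c = eos ∨ 1 = n then ms pre.length pre c else 0) * f (pre ++ [c]) := by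
  unfold Hsum
  apply Fintype.sum_equiv (Equiv.funUnique (Fin 1) Ω)
  intro v
  have hv : List.ofFn v = [v 0] := by
    simp [List.ofFn_succ]
  have hd : (Equiv.funUnique (Fin 1) Ω) v = v 0 := rfl
  rw [hv, hd]
  simp only [List.dropLast_singleton, List.getLast?_singleton, Finset.prod_range_one,
    List.take_zero, List.append_nil, List.getD_cons_zero, List.not_mem_nil,
    not_false_iff, true_and, Option.some.injEq]
  rfl

lemma Hsum_succ_succ (eos : Ω) (ms : ℕ → List Ω → Ω → ℝ) (f : List Ω → ℝ)
    (n : ℕ) (pre : List Ω) (i : ℕ) :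
    Hsum eos ms f (n + 1) pre (i + 2) =
      ∑ c, (if c = eos then 0
        else ms pre.length pre c * Hsum eos ms f n (pre ++ [c]) (i + 1)) := by
  classical
  -- pointwise key identity
  have key : ∀ (c : Ω), c ≠ eos → ∀ (a : Ω) (s' : List Ω),
      (if eos ∉ (c :: a :: s').dropLast ∧
          ((c :: a :: s').getLast? = some eos ∨ i + 2 = n + 1)
        then ∏ k ∈ Finset.range (i + 2),
          ms (pre.length + k) (pre ++ (c :: a :: s').take k) ((c :: a :: s').getD k eos)
        else 0) * f (pre ++ c :: a :: s')
      = ms pre.length pre c *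
        ((if eos ∉ (a :: s').dropLast ∧ ((a :: s').getLast? = some eos ∨ i + 1 = n)
          then ∏ k ∈ Finset.range (i + 1),
            ms ((pre ++ [c]).length + k) ((pre ++ [c]) ++ (a :: s').take k)
              ((a :: s').getD k eos)
          else 0) * f ((pre ++ [c]) ++ (a :: s'))) := by
    intro c hc a s'
    have hCA : (eos ∉ (c :: a :: s').dropLast ∧
        ((c :: a :: s').getLast? = some eos ∨ i + 2 = n + 1)) ↔
        (eos ∉ (a :: s').dropLast ∧ ((a :: s').getLast? = some eos ∨ i + 1 = n)) := by
      rw [List.dropLast_cons₂, List.getLast?_cons_cons]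
      simp only [List.mem_cons, not_or]
      constructor
      · rintro ⟨⟨-, h1⟩, h2⟩
        refine ⟨h1, ?_⟩
        rcases h2 with h | h
        · exact Or.inl h
        · exact Or.inr (by omega)
      · rintro ⟨h1, h2⟩
        refine ⟨⟨fun he => hc he.symm, h1⟩, ?_⟩
        rcases h2 with h | h
        · exact Or.inl h
        · exact Or.inr (by omega)
    have hf : pre ++ c :: a :: s' = (pre ++ [c]) ++ a :: s' := by simp
    by_cases hA : eos ∉ (a :: s').dropLast ∧
        ((a :: s').getLast? = some eos ∨ i + 1 = n)
    · rw [if_pos (hCA.mpr hA), if_pos hA, hf]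
      have hP : ∏ k ∈ Finset.range (i + 2),
          ms (pre.length + k) (pre ++ (c :: a :: s').take k) ((c :: a :: s').getD k eos)
          = ms pre.length pre c * ∏ k ∈ Finset.range (i + 1),
            ms ((pre ++ [c]).length + k) ((pre ++ [c]) ++ (a :: s').take k)
              ((a :: s').getD k eos) := by
        rw [Finset.prod_range_succ']
        have hg0 : ms (pre.length + 0) (pre ++ (c :: a :: s').take 0)
            ((c :: a :: s').getD 0 eos) = ms pre.length pre c := by simp
        have hgk : ∀ k ∈ Finset.range (i + 1),
            ms (pre.length + (k + 1)) (pre ++ (c :: a :: s').take (k + 1))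
              ((c :: a :: s').getD (k + 1) eos)
            = ms ((pre ++ [c]).length + k) ((pre ++ [c]) ++ (a :: s').take k)
              ((a :: s').getD k eos) := by
          intro k _
          rw [List.take_succ_cons, List.getD_cons_succ]
          have e1 : pre.length + (k + 1) = (pre ++ [c]).length + k := by simp; omega
          have e2 : pre ++ c :: (a :: s').take k = (pre ++ [c]) ++ (a :: s').take k := by
            simp
          rw [e1, e2]
        rw [hg0, Finset.prod_congr rfl hgk, mul_comm]
      rw [hP]; ring
    · rw [if_neg (fun h => hA (hCA.mp h)), if_neg hA]; ring
  unfold Hsum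
  rw [← Equiv.sum_comp (Fin.consEquiv (fun _ : Fin (i + 2) => Ω)), Fintype.sum_prod_type]
  apply Finset.sum_congr rfl
  intro c _
  have hofn : ∀ w : Fin (i + 1) → Ω,
      List.ofFn (Fin.cons c w : ∀ _ : Fin (i + 2), Ω) = c :: List.ofFn w := by
    intro w; simp [List.ofFn_succ]
  by_cases hc : c = eos
  · subst hc
    rw [if_pos rfl]
    apply Finset.sum_eq_zero
    intro w _
    have hce : (Fin.consEquiv (fun _ : Fin (i + 2) => Ω)) (c, w) = Fin.cons c w := rfl
    rw [hce, hofn w]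
    rw [if_neg, zero_mul]
    rintro ⟨h1, -⟩
    apply h1
    have hw : List.ofFn w = w 0 :: List.ofFn (fun k : Fin i => w k.succ) := by
      simp [List.ofFn_succ]
    rw [hw, List.dropLast_cons₂]
    exact List.mem_cons_self
  · rw [if_neg hc, Finset.mul_sum]
    apply Finset.sum_congr rfl
    intro w _
    have hw : List.ofFn w = w 0 :: List.ofFn (fun k : Fin i => w k.succ) := by
      simp [List.ofFn_succ]
    have hce : (Fin.consEquiv (fun _ : Fin (i + 2) => Ω)) (c, w) = Fin.cons c w := rfl
    rw [hce, hofn w, hw]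
    exact key c hc (w 0) (List.ofFn (fun k : Fin i => w k.succ))
end Aux4
section Aux5
set_option linter.unusedSectionVars false
set_option maxHeartbeats 1000000
variable {Ω : Type*} [Fintype Ω] [DecidableEq Ω]

lemma sum_Icc_one_eq_range (u : ℕ → ℝ) (n : ℕ) :
    ∑ j ∈ Finset.Icc 1 n, u j = ∑ i ∈ Finset.range n, u (i + 1) := by
  rw [← Finset.Ico_add_one_right_eq_Icc, Finset.sum_Ico_eq_sum_range]
  have h1 : n + 1 - 1 = n := by omega
  rw [h1]
  apply Finset.sum_congr rfl
  intro k _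
  congr 1
  omega

lemma Fexp_eq_sum_Hsum (eos : Ω) (ms : ℕ → List Ω → Ω → ℝ) (f : List Ω → ℝ) :
    ∀ n pre, Fexp eos ms n pre f =
      (∑ j ∈ Finset.Icc 1 n, Hsum eos ms f n pre j) + (if n = 0 then f pre else 0) := by
  intro n
  induction n with
  | zero => intro pre; simp [Fexp]
  | succ n ih =>
    intro pre
    rw [if_neg (Nat.succ_ne_zero n), add_zero]
    have hIcc : ∑ j ∈ Finset.Icc 1 (n+1), Hsum eos ms f (n+1) pre j
        = (∑ i ∈ Finset.range n, Hsum eos ms f (n+1) pre (i+2))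
          + Hsum eos ms f (n+1) pre 1 := by
      rw [sum_Icc_one_eq_range (fun j => Hsum eos ms f (n+1) pre j) (n+1),
        Finset.sum_range_succ']
    rw [hIcc, Hsum_one]
    have hdec : ∀ i ∈ Finset.range n, Hsum eos ms f (n+1) pre (i+2) =
        ∑ c, (if c = eos then 0
          else ms pre.length pre c * Hsum eos ms f n (pre ++ [c]) (i+1)) :=
      fun i _ => Hsum_succ_succ eos ms f n pre i
    rw [Finset.sum_congr rfl hdec, Finset.sum_comm, ← Finset.sum_add_distrib]
    simp only [Fexp]
    apply Finset.sum_congr rfl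
    intro c _
    by_cases hc : c = eos
    · simp [hc]
    · simp only [if_neg hc]
      have hor : (c = eos ∨ 1 = n + 1) ↔ (n = 0) := by
        constructor
        · rintro (h | h); exact absurd h hc; omega
        · intro h; right; omega
      rw [ih (pre ++ [c])]
      by_cases hn : n = 0
      · subst hn
        simp [hor]
      · rw [if_neg hn, add_zero, if_neg (fun h => hn (hor.mp h)), zero_mul, add_zero,
          Finset.mul_sum,
          sum_Icc_one_eq_range (fun j => ms pre.length pre c * Hsum eos ms f n (pre ++ [c]) j) n]
  
lemma seqExp_eq_Fexp (eos : Ω) (ms : ℕ → List Ω → Ω → ℝ) (f : List Ω → ℝ)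
    (T : ℕ) (hT : 1 ≤ T) :
    seqExp eos ms T f = Fexp eos ms T [] f := by
  rw [Fexp_eq_sum_Hsum, if_neg (by omega), add_zero]
  unfold seqExp Hsum
  apply Finset.sum_congr rfl
  intro j hj
  rw [Finset.mem_Icc] at hj
  apply Finset.sum_congr rfl
  intro v _
  congr 1
  unfold seqProb
  have hlen : (List.ofFn v).length = j := List.length_ofFn
  have hne : List.ofFn v ≠ [] := by
    intro h
    rw [h] at hlen
    simp at hlen
    omega
  by_cases hC : eos ∉ (List.ofFn v).dropLast ∧ ((List.ofFn v).getLast? = some eos ∨ j = T)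
  · rw [if_pos, if_pos hC, hlen]
    · apply Finset.prod_congr rfl
      intro k _
      simp
    · refine ⟨hne, by rw [hlen]; exact hj.2, hC.1, ?_⟩
      rcases hC.2 with h | h
      · exact Or.inl h
      · exact Or.inr (by rw [hlen]; exact h)
  · rw [if_neg, if_neg hC]
    intro hS
    refine hC ⟨hS.2.2.1, ?_⟩
    rcases hS.2.2.2 with h | h
    · exact Or.inl h
    · exact Or.inr (by rw [← hlen]; exact h)
end Aux5
/-- **DistillSpec, summed bound.**
`Σ_{t=1}^{T} A_t(x) ≤ Σ_{t=1}^{T} (1 + 2(T − t)) · E_t(x)`. -/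
theorem sum_Aterm_le_weighted_sum_Eterm
    {Ω ι : Type*} [Fintype Ω] [DecidableEq Ω] (eos : Ω)
    (T : ℕ) (hT : 1 ≤ T)
    (p q : ι → List Ω → Ω → ℝ) (hp : IsModel p) (hq : IsModel q) (x : ι) :
    ∑ t ∈ Finset.Icc 1 T, Aterm eos p q x T t ≤
      ∑ t ∈ Finset.Icc 1 T, (1 + 2 * ((T : ℝ) - (t : ℝ))) * Eterm eos p q x T t := by
  classical
  have hA : ∀ t, Aterm eos p q x T t =
      Fexp eos (fun _ pre => p x pre) T [] (stepLoss p q x t) := by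
    intro t
    unfold Aterm modelExp
    exact seqExp_eq_Fexp eos _ _ T hT
  have hE : ∀ t, Eterm eos p q x T t =
      Fexp eos (fun _ pre => q x pre) T [] (stepLoss p q x t) := by
    intro t
    unfold Eterm modelExp
    exact seqExp_eq_Fexp eos _ _ T hT
  have key : ∀ t ∈ Finset.Icc 1 T,
      Aterm eos p q x T t ≤ Eterm eos p q x T t +
        2 * ∑ k ∈ Finset.Icc 1 (t - 1), Eterm eos p q x T k := by
    intro t ht
    rw [Finset.mem_Icc] at ht
    have h1 := hybrid_bound eos p q hp hq x t ht.1 T [] (by simpa using ht.2)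
    have h2 := Wacc_eq eos p q hq x (t - 1) T []
    simp only [List.length_nil, Nat.zero_add] at h2
    rw [h2] at h1
    have h3 : ∑ k ∈ Finset.Icc 1 (t - 1),
        Fexp eos (fun _ pre => q x pre) T [] (stepLoss p q x k)
        = ∑ k ∈ Finset.Icc 1 (t - 1), Eterm eos p q x T k :=
      Finset.sum_congr rfl (fun k _ => (hE k).symm)
    rw [h3] at h1
    rw [hA t, hE t]
    linarith
  refine le_trans (Finset.sum_le_sum key) (le_of_eq ?_)
  rw [Finset.sum_add_distrib]
  have hswap : ∑ t ∈ Finset.Icc 1 T, 2 * ∑ k ∈ Finset.Icc 1 (t - 1), Eterm eos p q x T k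
      = ∑ k ∈ Finset.Icc 1 T, (2 * ((T : ℝ) - (k : ℝ))) * Eterm eos p q x T k := by
    have hmem : ∀ (t k : ℕ), (t ∈ Finset.Icc 1 T ∧ k ∈ Finset.Icc 1 (t - 1)) ↔
        (t ∈ Finset.Icc (k + 1) T ∧ k ∈ Finset.Icc 1 T) := by
      intro t k
      simp only [Finset.mem_Icc]
      omega
    calc ∑ t ∈ Finset.Icc 1 T, 2 * ∑ k ∈ Finset.Icc 1 (t - 1), Eterm eos p q x T k
        = 2 * ∑ t ∈ Finset.Icc 1 T, ∑ k ∈ Finset.Icc 1 (t - 1), Eterm eos p q x T k := by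
          rw [Finset.mul_sum]
      _ = 2 * ∑ k ∈ Finset.Icc 1 T, ∑ _t ∈ Finset.Icc (k + 1) T, Eterm eos p q x T k := by
          rw [Finset.sum_comm' hmem]
      _ = ∑ k ∈ Finset.Icc 1 T, (2 * ((T : ℝ) - (k : ℝ))) * Eterm eos p q x T k := by
          rw [Finset.mul_sum]
          apply Finset.sum_congr rfl
          intro k hk
          rw [Finset.mem_Icc] at hk
          rw [Finset.sum_const, Nat.card_Icc]
          have hc : T + 1 - (k + 1) = T - k := by omega
          rw [hc, nsmul_eq_mul, Nat.cast_sub hk.2]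
          ring
  rw [hswap, ← Finset.sum_add_distrib]
  apply Finset.sum_congr rfl
  intro t _
  ring
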